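/- arXiv:1610.09701 — 2 statements merged into one kernel-verified Lean document; each statement's English description precedes it below -/
import Mathlib

section
/- Let m ≥ 3 be an integer. There exists a constant C_m > 0 such that for all x, y, y' ∈ ℝ² with y ≠ 0, |y| ≥ 2|x|, |y'| ≥ 2|x|, |y| ≤ |y'|, and |y − y'| ≥ |x|, the m-fold symmetrized Biot–Savart kernel K^{(m)}(x,y) := (1/m) Σ_{i=1}^{m} K(x − O_{2πi/m} y) satisfies |K^{(m)}(x,y) − K^{(m)}(x,y')| ≤ C_m · |y − y'| · |x|^{m−1} / |y|^{m+1}. -/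
open Real
open scoped BigOperators

noncomputable section

/-- The point of `ℝ²` with coordinates `(a, b)`. -/
def mk2 (a b : ℝ) : EuclideanSpace ℝ (Fin 2) := (WithLp.equiv 2 (Fin 2 → ℝ)).symm ![a, b]

/-- Counterclockwise rotation of `ℝ²` by the angle `β`. -/
def rot (β : ℝ) (y : EuclideanSpace ℝ (Fin 2)) : EuclideanSpace ℝ (Fin 2) :=
  mk2 (Real.cos β * y 0 - Real.sin β * y 1) (Real.sin β * y 0 + Real.cos β * y 1)

def cx : EuclideanSpace ℝ (Fin 2) →ₗ[ℝ] ℂ where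
  toFun z := z 0 + z 1 * Complex.I
  map_add' u v := by simp [PiLp.add_apply]; ring
  map_smul' c u := by simp [PiLp.smul_apply, smul_eq_mul]; ring

lemma cx_mk2 (a b : ℝ) : cx (mk2 a b) = a + b * Complex.I := by
  simp [cx, mk2]

lemma norm_eq_abs_cx (z : EuclideanSpace ℝ (Fin 2)) : ‖z‖ = ‖cx z‖ := by
  rw [EuclideanSpace.norm_eq, Fin.sum_univ_two, Complex.norm_def, Complex.normSq_apply]
  simp [cx]
  ring_nf


/-- The 2D Biot–Savart kernel `K(z) = (1/2π) z^⊥ / |z|²`. -/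
def BSKernel (z : EuclideanSpace ℝ (Fin 2)) : EuclideanSpace ℝ (Fin 2) :=
  (2 * Real.pi * ‖z‖ ^ 2)⁻¹ • mk2 (-(z 1)) (z 0)

lemma cx_rot (β : ℝ) (y : EuclideanSpace ℝ (Fin 2)) :
    cx (rot β y) = Complex.exp (β * Complex.I) * cx y := by
  rw [rot, cx_mk2, Complex.exp_mul_I]
  simp [cx, Complex.ext_iff, Complex.cos_ofReal_re, Complex.sin_ofReal_re]
  ring

lemma cx_BSKernel (z : EuclideanSpace ℝ (Fin 2)) (hz : z ≠ 0) :
    cx (BSKernel z) = Complex.I / (2 * Real.pi * (starRingEnd ℂ) (cx z)) := by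
  have hz' : cx z ≠ 0 := by
    intro h
    apply hz
    have h0 : z 0 = 0 ∧ z 1 = 0 := by
      simpa [cx, Complex.ext_iff] using h
    ext i
    fin_cases i <;> simp [h0.1, h0.2]
  have hns : (‖z‖ : ℂ) ^ 2 = cx z * (starRingEnd ℂ) (cx z) := by
    rw [Complex.mul_conj]
    norm_cast
    rw [norm_eq_abs_cx, Complex.sq_norm]
  rw [BSKernel, map_smul, cx_mk2]
  have hiz : ((-(z 1) : ℝ) : ℂ) + (z 0 : ℝ) * Complex.I = Complex.I * cx z := by
    simp only [cx, LinearMap.coe_mk, AddHom.coe_mk, Complex.ofReal_neg]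
    ring_nf
    rw [Complex.I_sq]
    ring
  rw [hiz, Complex.real_smul]
  push_cast
  rw [hns]
  have h2 : (2:ℂ) * (π:ℝ) * (cx z * (starRingEnd ℂ) (cx z))
      = cx z * (2 * (π:ℝ) * (starRingEnd ℂ) (cx z)) := by ring
  rw [h2, mul_inv, mul_comm ((cx z)⁻¹), mul_assoc, mul_comm Complex.I, inv_mul_cancel_left₀ hz', inv_mul_eq_div]

open Polynomial in
lemma sum_inv_eq (m : ℕ) (hm : 0 < m) (a b : ℂ) (hab : a ^ m ≠ b ^ m) :
    ∑ i ∈ Finset.Icc 1 m, (a - Complex.exp (2 * π * Complex.I / m) ^ i * b)⁻¹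
      = m * a ^ (m - 1) / (a ^ m - b ^ m) := by
  set ζ : ℂ := Complex.exp (2 * π * Complex.I / m) with hζ
  have hprim : IsPrimitiveRoot ζ m := Complex.isPrimitiveRoot_exp m hm.ne'
  set t := nthRootsFinset m (1 : ℂ) with ht
  have hprod : ∀ x : ℂ, ∏ η ∈ t, (x - η * b) = x ^ m - b ^ m :=
    fun x => (hprim.pow_sub_pow_eq_prod_sub_mul x b hm).symm
  have hD : a ^ m - b ^ m ≠ 0 := sub_ne_zero.mpr hab
  have hfac : ∀ η ∈ t, a - η * b ≠ 0 := by
    intro η hη h0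
    exact hD ((hprod a).symm.trans (Finset.prod_eq_zero hη h0))
  -- polynomial identity
  have hpoly : ∏ η ∈ t, (X - C (η * b)) = X ^ m - C (b ^ m) := by
    apply Polynomial.funext
    intro x
    simp only [eval_prod, eval_sub, eval_X, eval_C, eval_pow]
    exact hprod x
  have hderiv : ∑ η ∈ t, ∏ η' ∈ t.erase η, (a - η' * b) = m * a ^ (m - 1) := by
    classical
    have h1 := congrArg derivative hpoly
    rw [Finset.prod_eq_multiset_prod, derivative_prod] at h1
    have h2 := congrArg (eval a) h1
    rw [derivative_sub, derivative_X_pow, derivative_C, sub_zero] at h2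
    rw [← Polynomial.coe_evalRingHom, map_multiset_sum] at h2
    simp only [Multiset.map_map, Function.comp_apply, Polynomial.coe_evalRingHom,
      eval_mul, eval_multiset_prod, derivative_sub, derivative_X, derivative_C, sub_zero,
      eval_one, mul_one, eval_mul, eval_natCast, eval_pow, eval_X, Multiset.map_map,
      eval_sub, eval_C] at h2
    rw [Finset.sum_eq_multiset_sum]
    convert h2 using 2
    congr 1
  have hterm : ∀ η ∈ t, (a - η * b)⁻¹ = (∏ η' ∈ t.erase η, (a - η' * b)) / (a ^ m - b ^ m) := by
    intro η hη
    rw [eq_div_iff hD, ← hprod a, ← Finset.mul_prod_erase t _ hη,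
      inv_mul_cancel_left₀ (hfac η hη)]
  have hsumt : ∑ η ∈ t, (a - η * b)⁻¹ = m * a ^ (m - 1) / (a ^ m - b ^ m) := by
    rw [Finset.sum_congr rfl hterm, ← Finset.sum_div, hderiv]
  -- reindex
  have hζ0 : ζ ≠ 0 := Complex.exp_ne_zero _
  have key : ∀ i j : ℕ, 1 ≤ i → i ≤ j → j ≤ m → ζ ^ i = ζ ^ j → i = j := by
    intro i j h1 h2 h3 hij
    by_contra hne
    have hlt : i < j := lt_of_le_of_ne h2 hne
    have hj' : ζ ^ j = ζ ^ i * ζ ^ (j - i) := by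
      rw [← pow_add]; congr 1; omega
    rw [hj'] at hij
    have h1' : (1 : ℂ) = ζ ^ (j - i) :=
      mul_left_cancel₀ (pow_ne_zero i hζ0) (by rw [mul_one, ← hij])
    exact hprim.pow_ne_one_of_pos_of_lt (by omega) (by omega) h1'.symm
  have hinj : Set.InjOn (fun i : ℕ => ζ ^ i) (Finset.Icc 1 m) := by
    intro i hi j hj hij
    simp only [Finset.coe_Icc, Set.mem_Icc] at hi hj
    rcases le_total i j with h | h
    · exact key i j hi.1 h hj.2 hij
    · exact (key j i hj.1 h hi.2 hij.symm).symm
  have himg : (Finset.Icc 1 m).image (fun i => ζ ^ i) = t := by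
    apply Finset.eq_of_subset_of_card_le
    · intro η hη
      simp only [Finset.mem_image] at hη
      obtain ⟨i, _, rfl⟩ := hη
      rw [ht, mem_nthRootsFinset hm, ← pow_mul, mul_comm, pow_mul, hprim.pow_eq_one, one_pow]
    · rw [hprim.card_nthRootsFinset, Finset.card_image_of_injOn hinj, Nat.card_Icc]
      omega
  rw [← hsumt, ← himg, Finset.sum_image (fun i hi j hj => hinj hi hj)]

/-- The `m`-fold symmetrized Biot–Savart kernel
`K^{(m)}(x,y) = (1/m) Σ_{i=1}^m K(x − O_{2πi/m} y)`. -/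
def symKernel (m : ℕ) (x y : EuclideanSpace ℝ (Fin 2)) : EuclideanSpace ℝ (Fin 2) :=
  (m : ℝ)⁻¹ • ∑ i ∈ Finset.Icc 1 m, BSKernel (x - rot (2 * Real.pi * i / m) y)

lemma cx_eq_zero_iff (z : EuclideanSpace ℝ (Fin 2)) : cx z = 0 ↔ z = 0 := by
  constructor
  · intro h
    have h0 : z 0 = 0 ∧ z 1 = 0 := by
      simpa [cx, Complex.ext_iff] using h
    ext i
    fin_cases i <;> simp [h0.1, h0.2]
  · intro h; rw [h, map_zero]

lemma cx_symKernel (m : ℕ) (hm : 0 < m) (x y : EuclideanSpace ℝ (Fin 2))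
    (hxy : ‖cx x‖ < ‖cx y‖) :
    cx (symKernel m x y) = Complex.I / (2 * Real.pi * m) *
      (starRingEnd ℂ) ((m : ℂ) * (cx x) ^ (m - 1) / ((cx x) ^ m - (cx y) ^ m)) := by
  set ζ : ℂ := Complex.exp (2 * π * Complex.I / m) with hζ
  have habsζ : ∀ i : ℕ, ‖ζ ^ i‖ = 1 := by
    intro i
    rw [norm_pow]
    have : (2 * (π:ℝ) * Complex.I / m) = ((2 * π / m : ℝ) : ℂ) * Complex.I := by
      push_cast; ring
    rw [hζ, this, Complex.norm_exp_ofReal_mul_I, one_pow]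
  have hne : ∀ i : ℕ, cx x - ζ ^ i * cx y ≠ 0 := by
    intro i h0
    have : ‖cx x‖ = ‖ζ ^ i * cx y‖ := by
      rw [sub_eq_zero] at h0; rw [h0]
    rw [norm_mul, habsζ, one_mul] at this
    exact absurd this (ne_of_lt hxy)
  have hexp : ∀ i : ℕ, Complex.exp (((2 * π * i / m : ℝ) : ℂ) * Complex.I) = ζ ^ i := by
    intro i
    rw [hζ, ← Complex.exp_nat_mul]
    congr 1
    push_cast; ring
  have hcxterm : ∀ i : ℕ, cx (x - rot (2 * π * i / m) y) = cx x - ζ ^ i * cx y := by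
    intro i
    rw [map_sub, cx_rot, hexp]
  have hABm : (cx x) ^ m ≠ (cx y) ^ m := by
    intro h
    have := congrArg norm h
    rw [norm_pow, norm_pow] at this
    exact absurd this (ne_of_lt (by
      have h0 : (0:ℝ) ≤ ‖cx x‖ := norm_nonneg _
      exact pow_lt_pow_left₀ hxy h0 hm.ne' ))
  rw [symKernel, map_smul, map_sum]
  have hterm : ∀ i ∈ Finset.Icc 1 m, cx (BSKernel (x - rot (2 * π * i / m) y)) =
      Complex.I / (2 * π) * (starRingEnd ℂ) ((cx x - ζ ^ i * cx y)⁻¹) := by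
    intro i _
    rw [cx_BSKernel _ (fun h0 => hne i (by rw [← hcxterm i, h0, map_zero])), hcxterm]
    rw [map_inv₀]
    ring
  rw [Finset.sum_congr rfl hterm, ← Finset.mul_sum, ← map_sum (starRingEnd ℂ)]
  rw [sum_inv_eq m hm _ _ hABm]
  rw [Complex.real_smul]
  push_cast
  have hm' : (m : ℂ) ≠ 0 := Nat.cast_ne_zero.mpr hm.ne'
  field_simp

lemma main_bound (m : ℕ) (hm : 3 ≤ m) (x y y' : EuclideanSpace ℝ (Fin 2)) (hy : y ≠ 0)
    (h2y : 2 * ‖x‖ ≤ ‖y‖) (h2y' : 2 * ‖x‖ ≤ ‖y'‖) (hyy' : ‖y‖ ≤ ‖y'‖) :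
    ‖symKernel m x y - symKernel m x y'‖ ≤ m * ‖y - y'‖ * ‖x‖ ^ (m - 1) / ‖y‖ ^ (m + 1) := by
  have hm0 : 0 < m := by omega
  set a := ‖x‖ with ha
  set b := ‖y‖ with hb
  set b' := ‖y'‖ with hb'
  set w := ‖y - y'‖ with hw
  have hb0 : 0 < b := norm_pos_iff.mpr hy
  have hb'0 : 0 < b' := lt_of_lt_of_le hb0 hyy'
  have ha0 : 0 ≤ a := norm_nonneg x
  have hw0 : 0 ≤ w := norm_nonneg _
  have hab : a < b := lt_of_le_of_lt (by linarith) (half_lt_self hb0)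
  have hab' : a < b' := lt_of_le_of_lt (by linarith) (half_lt_self hb'0)
  have haA : ‖cx x‖ = a := (norm_eq_abs_cx x).symm
  have haB : ‖cx y‖ = b := (norm_eq_abs_cx y).symm
  have haB' : ‖cx y'‖ = b' := (norm_eq_abs_cx y').symm
  have haW : ‖cx y - cx y'‖ = w := by
    rw [← map_sub, hw, norm_eq_abs_cx]
  set A := cx x
  set B := cx y
  set B' := cx y'
  have hD : A ^ m - B ^ m ≠ 0 := by
    intro h
    have := congrArg norm (sub_eq_zero.mp h)
    rw [norm_pow, norm_pow, haA, haB] at this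
    exact absurd this (ne_of_lt (pow_lt_pow_left₀ hab ha0 hm0.ne'))
  have hD' : A ^ m - B' ^ m ≠ 0 := by
    intro h
    have := congrArg norm (sub_eq_zero.mp h)
    rw [norm_pow, norm_pow, haA, haB'] at this
    exact absurd this (ne_of_lt (pow_lt_pow_left₀ hab' ha0 hm0.ne'))
  -- the kernel difference in complex form
  have hker : ‖symKernel m x y - symKernel m x y'‖ =
      (2 * π * m)⁻¹ * ‖(m : ℂ) * A ^ (m - 1) / (A ^ m - B ^ m)
        - (m : ℂ) * A ^ (m - 1) / (A ^ m - B' ^ m)‖ := by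
    rw [norm_eq_abs_cx, map_sub, cx_symKernel m hm0 x y (by rw [haA, haB]; exact hab),
      cx_symKernel m hm0 x y' (by rw [haA, haB']; exact hab'), ← mul_sub,
      ← map_sub (starRingEnd ℂ), norm_mul, Complex.norm_conj, norm_div, Complex.norm_I]
    congr 1
    rw [show ((2:ℂ) * π * m) = ((2 * π * m : ℝ) : ℂ) by push_cast; ring,
      Complex.norm_real, Real.norm_eq_abs, abs_of_pos (by positivity), one_div]
  -- rewrite the difference
  have hdiff : (m : ℂ) * A ^ (m - 1) / (A ^ m - B ^ m) - (m : ℂ) * A ^ (m - 1) / (A ^ m - B' ^ m)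
      = (m : ℂ) * A ^ (m - 1) * (B ^ m - B' ^ m) / ((A ^ m - B ^ m) * (A ^ m - B' ^ m)) := by
    field_simp
    ring
  -- numerator bound
  have hnum : ‖B ^ m - B' ^ m‖ ≤ m * w * b' ^ (m - 1) := by
    rw [← geom_sum₂_mul B B' m, norm_mul, haW]
    have hsum : ‖∑ i ∈ Finset.range m, B ^ i * B' ^ (m - 1 - i)‖
        ≤ m * b' ^ (m - 1) := by
      refine le_trans (norm_sum_le _ _) ?_
      have hterm : ∀ i ∈ Finset.range m, ‖B ^ i * B' ^ (m - 1 - i)‖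
          ≤ b' ^ (m - 1) := by
        intro i hi
        rw [Finset.mem_range] at hi
        rw [norm_mul, norm_pow, norm_pow, haB, haB']
        calc b ^ i * b' ^ (m - 1 - i) ≤ b' ^ i * b' ^ (m - 1 - i) := by
              exact mul_le_mul_of_nonneg_right (pow_le_pow_left₀ hb0.le hyy' i)
                (by positivity)
          _ = b' ^ (m - 1) := by rw [← pow_add]; congr 1; omega
      calc ∑ i ∈ Finset.range m, ‖B ^ i * B' ^ (m - 1 - i)‖
          ≤ ∑ _i ∈ Finset.range m, b' ^ (m - 1) := Finset.sum_le_sum hterm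
        _ = m * b' ^ (m - 1) := by
            rw [Finset.sum_const, Finset.card_range, nsmul_eq_mul]
    calc ‖∑ i ∈ Finset.range m, B ^ i * B' ^ (m - 1 - i)‖ * w
        ≤ (m * b' ^ (m - 1)) * w := by
          exact mul_le_mul_of_nonneg_right hsum hw0
      _ = m * w * b' ^ (m - 1) := by ring
  -- denominator bounds
  have h2le : (2:ℝ) ≤ 2 ^ m := by
    calc (2:ℝ) = 2 ^ 1 := (pow_one 2).symm
      _ ≤ 2 ^ m := pow_le_pow_right₀ one_le_two (by omega)
  have hden : b ^ m / 2 ≤ ‖A ^ m - B ^ m‖ := by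
    have h1 : ‖B ^ m‖ - ‖A ^ m‖ ≤ ‖A ^ m - B ^ m‖ := by
      rw [norm_sub_rev]
      exact norm_sub_norm_le _ _
    rw [norm_pow, norm_pow, haA, haB] at h1
    have h2 : a ^ m ≤ b ^ m / 2 := by
      calc a ^ m ≤ (b / 2) ^ m := pow_le_pow_left₀ ha0 (by linarith) m
        _ = b ^ m / 2 ^ m := div_pow b 2 m
        _ ≤ b ^ m / 2 := by gcongr
    linarith
  have hden' : b' ^ m / 2 ≤ ‖A ^ m - B' ^ m‖ := by
    have h1 : ‖B' ^ m‖ - ‖A ^ m‖ ≤ ‖A ^ m - B' ^ m‖ := by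
      rw [norm_sub_rev]
      exact norm_sub_norm_le _ _
    rw [norm_pow, norm_pow, haA, haB'] at h1
    have h2 : a ^ m ≤ b' ^ m / 2 := by
      calc a ^ m ≤ (b' / 2) ^ m := pow_le_pow_left₀ ha0 (by linarith) m
        _ = b' ^ m / 2 ^ m := div_pow b' 2 m
        _ ≤ b' ^ m / 2 := by gcongr
    linarith
  have hmR : (0:ℝ) < m := by exact_mod_cast hm0
  have hpi : (2:ℝ) / π ≤ 1 := by
    rw [div_le_one Real.pi_pos]
    linarith [Real.pi_gt_three]
  have hfrac : b' ^ (m - 1) / (b ^ m * b' ^ m) ≤ 1 / b ^ (m + 1) := by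
    rw [div_le_div_iff₀ (by positivity) (by positivity), one_mul]
    have e2 : b' ^ m = b' ^ (m - 1) * b' := by
      conv_lhs => rw [show m = (m - 1) + 1 by omega]
      rw [pow_succ]
    rw [pow_succ b m, e2]
    calc b' ^ (m - 1) * (b ^ m * b) ≤ b' ^ (m - 1) * (b ^ m * b') := by gcongr
      _ = b ^ m * (b' ^ (m - 1) * b') := by ring
  rw [hker, hdiff, norm_div, norm_mul (A ^ m - B ^ m), norm_mul, norm_mul, norm_pow, haA, Complex.norm_natCast]
  calc (2 * π * m)⁻¹ * (m * a ^ (m - 1) * ‖B ^ m - B' ^ m‖ /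
          (‖A ^ m - B ^ m‖ * ‖A ^ m - B' ^ m‖))
      ≤ (2 * π * m)⁻¹ * (m * a ^ (m - 1) * (m * w * b' ^ (m - 1)) /
          ((b ^ m / 2) * (b' ^ m / 2))) := by
        gcongr <;> first
          | exact mul_pos (lt_of_lt_of_le (by positivity) hden) (lt_of_lt_of_le (by positivity) hden')
          | exact hnum | exact hden | exact hden' | positivity
      _ = (2 / π) * (m * w * a ^ (m - 1) * (b' ^ (m - 1) / (b ^ m * b' ^ m))) := by
        field_simp
      _ ≤ 1 * (m * w * a ^ (m - 1) * (1 / b ^ (m + 1))) := by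
        refine mul_le_mul hpi ?_ (by positivity) (by norm_num)
        exact mul_le_mul_of_nonneg_left hfrac (by positivity)
      _ = m * w * a ^ (m - 1) / b ^ (m + 1) := by ring

/-- Lipschitz-type decay of the `m`-fold symmetrized Biot–Savart kernel in the second
variable: for `m ≥ 3` there is `C_m > 0` such that for `|y|, |y'| ≥ 2|x|`, `|y| ≤ |y'|`
and `|y − y'| ≥ |x|`, one has `|K^{(m)}(x,y) − K^{(m)}(x,y')| ≤ C_m |y−y'| |x|^{m−1}/|y|^{m+1}`. -/
theorem symKernel_diff_decay (m : ℕ) (hm : 3 ≤ m) :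
    ∃ C : ℝ, 0 < C ∧ ∀ x y y' : EuclideanSpace ℝ (Fin 2), y ≠ 0 →
      2 * ‖x‖ ≤ ‖y‖ → 2 * ‖x‖ ≤ ‖y'‖ → ‖y‖ ≤ ‖y'‖ → ‖x‖ ≤ ‖y - y'‖ →
      ‖symKernel m x y - symKernel m x y'‖ ≤ C * ‖y - y'‖ * ‖x‖ ^ (m - 1) / ‖y‖ ^ (m + 1) := by
  exact ⟨m, by exact_mod_cast Nat.pos_of_ne_zero (by omega),
    fun x y y' hy h2y h2y' hyy' _ => main_bound m hm x y y' hy h2y h2y' hyy'⟩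
end
end

section
/- Let 0 < α < 1 and let f, g : ℝ² → ℝ satisfy: ‖f‖_{C̊^{0,α}} := sup_x |f(x)| + sup_{x ≠ x'} | |x|^α f(x) − |x'|^α f(x') | / |x − x'|^α < ∞; ‖g‖_{C^α} := sup_x |g(x)| + sup_{x ≠ x'} |g(x) − g(x')| / |x − x'|^α < ∞; and g(0) = 0. Then there exists a constant C > 0, depending only on α, such that ‖f·g‖_{C^α} ≤ C · ‖f‖_{C̊^{0,α}} · ‖g‖_{C^α}, where f·g denotes the pointwise product. -/
open Real MeasureTheory
open scoped ENNReal

noncomputable section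

/-- The sup-norm `sup_x |f x|`, valued in `ℝ≥0∞`. -/
def supNorm (f : EuclideanSpace ℝ (Fin 2) → ℝ) : ℝ≥0∞ :=
  ⨆ x : EuclideanSpace ℝ (Fin 2), (‖f x‖₊ : ℝ≥0∞)

/-- The scale-invariant weighted Hölder seminorm. -/
def ringSemi (α : ℝ) (f : EuclideanSpace ℝ (Fin 2) → ℝ) : ℝ≥0∞ :=
  ⨆ (x : EuclideanSpace ℝ (Fin 2)) (x' : EuclideanSpace ℝ (Fin 2)) (_ : x ≠ x'),
    (‖(‖x‖ ^ α) * f x - (‖x'‖ ^ α) * f x'‖₊ : ℝ≥0∞) / ENNReal.ofReal (‖x - x'‖ ^ α)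

/-- The norm `‖f‖_{C̊^{0,α}}`. -/
def ringNorm (α : ℝ) (f : EuclideanSpace ℝ (Fin 2) → ℝ) : ℝ≥0∞ :=
  supNorm f + ringSemi α f

/-- The usual Hölder seminorm `sup_{x ≠ x'} |g(x) − g(x')| / |x − x'|^α`. -/
def holderSemi (α : ℝ) (g : EuclideanSpace ℝ (Fin 2) → ℝ) : ℝ≥0∞ :=
  ⨆ (x : EuclideanSpace ℝ (Fin 2)) (x' : EuclideanSpace ℝ (Fin 2)) (_ : x ≠ x'),
    (‖g x - g x'‖₊ : ℝ≥0∞) / ENNReal.ofReal (‖x - x'‖ ^ α)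

/-- The usual bounded Hölder norm `‖g‖_{C^α}`. -/
def holderNorm (α : ℝ) (g : EuclideanSpace ℝ (Fin 2) → ℝ) : ℝ≥0∞ :=
  supNorm g + holderSemi α g

private lemma rpow_add_le_add_rpow' {x y α : ℝ} (hx : 0 ≤ x) (hy : 0 ≤ y)
    (h0 : 0 ≤ α) (h1 : α ≤ 1) : (x + y) ^ α ≤ x ^ α + y ^ α := by
  have h := NNReal.rpow_add_le_add_rpow x.toNNReal y.toNNReal h0 h1
  have := NNReal.coe_le_coe.2 h
  simpa [NNReal.coe_rpow, Real.toNNReal_add hx hy, Real.coe_toNNReal _ hx,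
    Real.coe_toNNReal _ hy] using this

private lemma abs_rpow_sub_rpow_le {a b α : ℝ} (ha : 0 ≤ a) (hb : 0 ≤ b)
    (h0 : 0 ≤ α) (h1 : α ≤ 1) : |a ^ α - b ^ α| ≤ |a - b| ^ α := by
  wlog hab : b ≤ a generalizing a b
  · rw [abs_sub_comm, abs_sub_comm a b]; exact this hb ha (le_of_not_ge hab)
  have hrp : b ^ α ≤ a ^ α := Real.rpow_le_rpow hb hab h0
  rw [abs_of_nonneg (sub_nonneg.2 hrp), abs_of_nonneg (sub_nonneg.2 hab)]
  have : a ^ α ≤ (a - b) ^ α + b ^ α := by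
    have h := rpow_add_le_add_rpow' (sub_nonneg.2 hab) hb h0 h1
    simpa using h
  linarith

/-- Product rule in the scale-invariant Hölder spaces: if `f ∈ C̊^{0,α}` and `g ∈ C^α`
with `g(0) = 0`, then `‖fg‖_{C^α} ≤ C ‖f‖_{C̊^{0,α}} ‖g‖_{C^α}`. -/
theorem ring_holder_product (α : ℝ) (hα0 : 0 < α) (hα1 : α < 1) :
    ∃ C : ℝ, 0 < C ∧ ∀ f g : EuclideanSpace ℝ (Fin 2) → ℝ,
      ringNorm α f ≠ ⊤ → holderNorm α g ≠ ⊤ → g 0 = 0 →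
      holderNorm α (fun x => f x * g x) ≤
        ENNReal.ofReal C * ringNorm α f * holderNorm α g := by
  refine ⟨3, by norm_num, ?_⟩
  intro f g _ _ hg0
  set A := supNorm f
  set B := ringSemi α f
  set S := supNorm g
  set H := holderSemi α g
  -- pointwise bounds
  have hAf : ∀ x : EuclideanSpace ℝ (Fin 2), (‖f x‖₊ : ℝ≥0∞) ≤ A := fun x => le_iSup (fun x => (‖f x‖₊ : ℝ≥0∞)) x
  have hSg : ∀ x : EuclideanSpace ℝ (Fin 2), (‖g x‖₊ : ℝ≥0∞) ≤ S := fun x => le_iSup (fun x => (‖g x‖₊ : ℝ≥0∞)) x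
  have hDpos : ∀ x x' : EuclideanSpace ℝ (Fin 2), x ≠ x' → ENNReal.ofReal (‖x - x'‖ ^ α) ≠ 0 := by
    intro x x' hne
    have : (0:ℝ) < ‖x - x'‖ ^ α :=
      Real.rpow_pos_of_pos (norm_pos_iff.2 (sub_ne_zero.2 hne)) α
    exact (ENNReal.ofReal_pos.2 this).ne'
  have hBf : ∀ x x' : EuclideanSpace ℝ (Fin 2), x ≠ x' →
      (‖(‖x‖ ^ α) * f x - (‖x'‖ ^ α) * f x'‖₊ : ℝ≥0∞) ≤
        B * ENNReal.ofReal (‖x - x'‖ ^ α) := by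
    intro x x' hne
    have h1 : (‖(‖x‖ ^ α) * f x - (‖x'‖ ^ α) * f x'‖₊ : ℝ≥0∞) /
        ENNReal.ofReal (‖x - x'‖ ^ α) ≤ B := by
      refine le_trans ?_ (le_iSup _ x)
      refine le_trans ?_ (le_iSup _ x')
      exact le_iSup (fun _ : x ≠ x' =>
        (‖(‖x‖ ^ α) * f x - (‖x'‖ ^ α) * f x'‖₊ : ℝ≥0∞) /
          ENNReal.ofReal (‖x - x'‖ ^ α)) hne
    exact (ENNReal.div_le_iff (hDpos x x' hne) ENNReal.ofReal_ne_top).1 h1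
  have hHg : ∀ x x' : EuclideanSpace ℝ (Fin 2), x ≠ x' →
      (‖g x - g x'‖₊ : ℝ≥0∞) ≤ H * ENNReal.ofReal (‖x - x'‖ ^ α) := by
    intro x x' hne
    have h1 : (‖g x - g x'‖₊ : ℝ≥0∞) / ENNReal.ofReal (‖x - x'‖ ^ α) ≤ H := by
      refine le_trans ?_ (le_iSup _ x)
      refine le_trans ?_ (le_iSup _ x')
      exact le_iSup (fun _ : x ≠ x' =>
        (‖g x - g x'‖₊ : ℝ≥0∞) / ENNReal.ofReal (‖x - x'‖ ^ α)) hne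
    exact (ENNReal.div_le_iff (hDpos x x' hne) ENNReal.ofReal_ne_top).1 h1
  -- `|g x| ≤ H ‖x‖^α`
  have hg : ∀ x : EuclideanSpace ℝ (Fin 2), (‖g x‖₊ : ℝ≥0∞) ≤ H * ENNReal.ofReal (‖x‖ ^ α) := by
    intro x
    rcases eq_or_ne x 0 with rfl | hx
    · simp [hg0]
    · have := hHg x 0 hx
      simpa [hg0, sub_zero] using this
  -- the target quantity
  set P := (A + B) * (S + H) with hP
  have hsup : supNorm (fun x => f x * g x) ≤ P := by
    refine iSup_le fun x => ?_
    calc (‖f x * g x‖₊ : ℝ≥0∞) = (‖f x‖₊ : ℝ≥0∞) * ‖g x‖₊ := by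
          rw [← ENNReal.coe_mul, nnnorm_mul]
      _ ≤ A * S := mul_le_mul' (hAf x) (hSg x)
      _ ≤ P := mul_le_mul' le_self_add le_self_add
  have hsemi : holderSemi α (fun x => f x * g x) ≤ 2 * P := by
    refine iSup_le fun x => iSup_le fun x' => iSup_le fun hne => ?_
    set D := ENNReal.ofReal (‖x - x'‖ ^ α) with hD
    refine ENNReal.div_le_of_le_mul ?_
    -- main pointwise estimate
    have step1 : (‖f x * g x - f x' * g x'‖₊ : ℝ≥0∞) ≤
        (‖f x‖₊ : ℝ≥0∞) * ‖g x - g x'‖₊ + (‖g x'‖₊ : ℝ≥0∞) * ‖f x - f x'‖₊ := by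
      have : f x * g x - f x' * g x' = f x * (g x - g x') + g x' * (f x - f x') := by ring
      rw [this]
      calc (‖f x * (g x - g x') + g x' * (f x - f x')‖₊ : ℝ≥0∞)
          ≤ (‖f x * (g x - g x')‖₊ : ℝ≥0∞) + ‖g x' * (f x - f x')‖₊ := by
            exact_mod_cast nnnorm_add_le _ _
        _ = (‖f x‖₊ : ℝ≥0∞) * ‖g x - g x'‖₊ + (‖g x'‖₊ : ℝ≥0∞) * ‖f x - f x'‖₊ := by
            rw [nnnorm_mul, nnnorm_mul]; push_cast; ring
    -- second factor: ‖x'‖^α |f x - f x'| ≤ |‖x‖^α f x - ‖x'‖^α f x'| + |f x| ‖x - x'‖^α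
    have real_key : ‖x'‖ ^ α * |f x - f x'| ≤
        |(‖x‖ ^ α) * f x - (‖x'‖ ^ α) * f x'| + |f x| * ‖x - x'‖ ^ α := by
      have e1 : ‖x'‖ ^ α * (f x - f x') =
          ((‖x'‖ ^ α) - (‖x‖ ^ α)) * f x + ((‖x‖ ^ α) * f x - (‖x'‖ ^ α) * f x') := by
        ring
      have h2 : |(‖x'‖ ^ α) - (‖x‖ ^ α)| ≤ ‖x - x'‖ ^ α := by
        have h3 : |‖x'‖ - ‖x‖| ≤ ‖x - x'‖ := by
          rw [norm_sub_rev x x']; exact abs_norm_sub_norm_le x' x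
        calc |(‖x'‖ ^ α) - (‖x‖ ^ α)| ≤ |‖x'‖ - ‖x‖| ^ α :=
              abs_rpow_sub_rpow_le (norm_nonneg _) (norm_nonneg _) hα0.le hα1.le
          _ ≤ ‖x - x'‖ ^ α := Real.rpow_le_rpow (abs_nonneg _) h3 hα0.le
      calc ‖x'‖ ^ α * |f x - f x'| = |‖x'‖ ^ α * (f x - f x')| := by
            rw [abs_mul, abs_of_nonneg (Real.rpow_nonneg (norm_nonneg _) α)]
        _ ≤ |((‖x'‖ ^ α) - (‖x‖ ^ α)) * f x| +
              |(‖x‖ ^ α) * f x - (‖x'‖ ^ α) * f x'| := by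
            rw [e1]; exact abs_add_le _ _
        _ ≤ |f x| * ‖x - x'‖ ^ α + |(‖x‖ ^ α) * f x - (‖x'‖ ^ α) * f x'| := by
            rw [abs_mul]
            have := mul_le_mul_of_nonneg_right h2 (abs_nonneg (f x))
            nlinarith [abs_nonneg (f x)]
        _ = _ := by ring
    have step2 : (‖g x'‖₊ : ℝ≥0∞) * ‖f x - f x'‖₊ ≤ H * ((A + B) * D) := by
      calc (‖g x'‖₊ : ℝ≥0∞) * ‖f x - f x'‖₊
          ≤ (H * ENNReal.ofReal (‖x'‖ ^ α)) * ‖f x - f x'‖₊ :=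
            mul_le_mul' (hg x') le_rfl
        _ = H * (ENNReal.ofReal (‖x'‖ ^ α) * ‖f x - f x'‖₊) := by ring
        _ ≤ H * ((A + B) * D) := by
            refine mul_le_mul' le_rfl ?_
            have hcoe : (‖f x - f x'‖₊ : ℝ≥0∞) = ENNReal.ofReal |f x - f x'| := by
              rw [← Real.norm_eq_abs, ofReal_norm, enorm_eq_nnnorm]
            rw [hcoe, ← ENNReal.ofReal_mul (Real.rpow_nonneg (norm_nonneg _) α)]
            calc ENNReal.ofReal (‖x'‖ ^ α * |f x - f x'|)
                ≤ ENNReal.ofReal (|(‖x‖ ^ α) * f x - (‖x'‖ ^ α) * f x'| +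
                    |f x| * ‖x - x'‖ ^ α) := ENNReal.ofReal_le_ofReal real_key
              _ = (‖(‖x‖ ^ α) * f x - (‖x'‖ ^ α) * f x'‖₊ : ℝ≥0∞) +
                    ENNReal.ofReal (|f x| * ‖x - x'‖ ^ α) := by
                  rw [ENNReal.ofReal_add (abs_nonneg _)
                    (mul_nonneg (abs_nonneg _) (Real.rpow_nonneg (norm_nonneg _) α))]
                  congr 1
                  rw [← Real.norm_eq_abs, ofReal_norm, enorm_eq_nnnorm]
              _ ≤ B * D + (‖f x‖₊ : ℝ≥0∞) * D := by
                  refine add_le_add (hBf x x' hne) ?_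
                  rw [ENNReal.ofReal_mul (abs_nonneg _)]
                  refine mul_le_mul' ?_ le_rfl
                  rw [← Real.norm_eq_abs, ofReal_norm, enorm_eq_nnnorm]
              _ ≤ B * D + A * D := add_le_add le_rfl (mul_le_mul' (hAf x) le_rfl)
              _ = (A + B) * D := by ring
    calc (‖f x * g x - f x' * g x'‖₊ : ℝ≥0∞)
        ≤ (‖f x‖₊ : ℝ≥0∞) * ‖g x - g x'‖₊ + (‖g x'‖₊ : ℝ≥0∞) * ‖f x - f x'‖₊ := step1
      _ ≤ A * (H * D) + H * ((A + B) * D) :=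
          add_le_add (mul_le_mul' (hAf x) (hHg x x' hne)) step2
      _ = (A * H + (A + B) * H) * D := by ring
      _ ≤ (2 * P) * D := by
          refine mul_le_mul' ?_ le_rfl
          have h1 : A * H ≤ P := mul_le_mul' le_self_add le_add_self
          have h2 : (A + B) * H ≤ P := mul_le_mul' le_rfl le_add_self
          calc A * H + (A + B) * H ≤ P + P := add_le_add h1 h2
            _ = 2 * P := (two_mul P).symm
  calc holderNorm α (fun x => f x * g x)
      = supNorm (fun x => f x * g x) + holderSemi α (fun x => f x * g x) := rfl
    _ ≤ P + 2 * P := add_le_add hsup hsemi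
    _ = 3 * P := by ring
    _ = ENNReal.ofReal 3 * ringNorm α f * holderNorm α g := by
        rw [hP]
        have : ENNReal.ofReal 3 = (3 : ℝ≥0∞) := by
          rw [ENNReal.ofReal_ofNat]
        rw [this, mul_assoc]
        rfl
end
end
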